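/- arXiv:2509.01253 — 2 statements merged into one kernel-verified Lean document; each statement's English description precedes it below -/
import Mathlib

section
/- (Partial trace extraction, level 1) For all P in the cyclotomic field K = ℚ[X]/(Φ_{t^α}) and any fixed element Ω (here Ω = conj(Ω_i^*), an element of K), Tr_{K_1/K_0}(P(X)·Ω(X)) evaluated after full descent can be written as Σ_{k=1}^{t−1} P(X^k)·Ω(X^k) composed with the remaining partial trace; formally, applying the sum of automorphisms X ↦ X^k for k = 1,...,t−1 to the product P·Ω computes the image of P·Ω under the sum over a set of coset representatives of Gal(K/K_1)-cosets corresponding to Gal(K_1/K_0). -/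
/-- Level-1 partial trace extraction: with `t` prime, `α ≥ 1`, `M = t^α`,
`K = ℚ(ζ_M)`, let `K₁` be the fixed field of the subgroup
`Gal(K/K₁) = {σ_d : d ≡ 1 mod t}` of `Gal(K/ℚ)`, and let
`σ_1, ..., σ_{t-1}` be the automorphisms `X ↦ X^k` (`σ_k ζ = ζ^k`,
`k = 1, ..., t-1`), assumed to form a set of representatives of the cosets of
`Gal(K/K₁)` in `Gal(K/ℚ)` (corresponding to `Gal(K₁/K₀)`).  Then for all
`P, Ω ∈ K` whose product lies in `K₁`, applying the sum of these automorphisms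
to `P·Ω` computes the partial trace `Tr_{K₁/K₀}(P(X)·Ω(X))`:
`Tr_{K₁/K₀}(P·Ω) = ∑_{k=1}^{t-1} P(X^k)·Ω(X^k)`. -/
theorem partial_trace_extraction_level_one
    (t α : ℕ) (ht : t.Prime) (hα : 1 ≤ α)
    (M : ℕ+) (hM : (M : ℕ) = t ^ α)
    (K : Type*) [Field K] [CharZero K] [IsCyclotomicExtension {(M : ℕ)} ℚ K]
    [FiniteDimensional ℚ K]
    (hirr : Irreducible (Polynomial.cyclotomic M ℚ))
    (ζ : K) (hζ : IsPrimitiveRoot ζ (M : ℕ))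
    (hdvd1 : t ∣ (M : ℕ))
    (G₁ : Subgroup (K ≃ₐ[ℚ] K))
    (hG₁ : G₁ = Subgroup.comap (IsCyclotomicExtension.autEquivPow K hirr).toMonoidHom
        (MonoidHom.ker (Units.map (ZMod.castHom hdvd1 (ZMod t)).toMonoidHom)))
    (K₁ : IntermediateField ℚ K)
    (hK₁ : K₁ = IntermediateField.fixedField G₁)
    (σ : Fin (t - 1) → (K ≃ₐ[ℚ] K))
    (hσ : ∀ k : Fin (t - 1), σ k ζ = ζ ^ ((k : ℕ) + 1))
    (hreps : ∀ τ : K ≃ₐ[ℚ] K, ∃! k : Fin (t - 1), (σ k)⁻¹ * τ ∈ G₁) :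
    ∀ (P Ω : K) (h : P * Ω ∈ K₁),
      algebraMap ℚ K (Algebra.trace ℚ K₁ ⟨P * Ω, h⟩) =
        ∑ k : Fin (t - 1), (σ k P) * (σ k Ω) := by
  classical
  intro P Ω h
  haveI : IsGalois ℚ K := IsCyclotomicExtension.isGalois {(M : ℕ)} ℚ K
  have hfix : ∀ g : G₁, (g : K ≃ₐ[ℚ] K) (P * Ω) = P * Ω := by
    intro g
    have hx : P * Ω ∈ IntermediateField.fixedField G₁ := hK₁ ▸ h
    exact hx g
  have hbij : Function.Bijective
      (fun p : Fin (t - 1) × G₁ => σ p.1 * (p.2 : K ≃ₐ[ℚ] K)) := by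
    constructor
    · rintro ⟨k, g⟩ ⟨k', g'⟩ he
      simp only at he
      have h1 : (σ k)⁻¹ * (σ k * (g : K ≃ₐ[ℚ] K)) ∈ G₁ := by
        simpa [inv_mul_cancel_left] using g.2
      have h2 : (σ k')⁻¹ * (σ k * (g : K ≃ₐ[ℚ] K)) ∈ G₁ := by
        rw [he]; simpa [inv_mul_cancel_left] using g'.2
      obtain ⟨k0, -, huniq⟩ := hreps (σ k * (g : K ≃ₐ[ℚ] K))
      have hkk : k = k' := (huniq k h1).trans (huniq k' h2).symm
      subst hkk
      have hg : (g : K ≃ₐ[ℚ] K) = (g' : K ≃ₐ[ℚ] K) := mul_left_cancel he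
      exact Prod.ext rfl (Subtype.ext hg)
    · intro τ
      obtain ⟨k, hk, -⟩ := hreps τ
      exact ⟨⟨k, ⟨(σ k)⁻¹ * τ, hk⟩⟩, by simp [mul_inv_cancel_left]⟩
  have hsum : ∑ τ : K ≃ₐ[ℚ] K, τ (P * Ω)
      = Fintype.card G₁ • ∑ k : Fin (t - 1), σ k (P * Ω) := by
    rw [← Fintype.sum_bijective _ hbij _ (fun τ => τ (P * Ω)) (fun _ => rfl),
      Fintype.sum_prod_type]
    have : ∀ k : Fin (t - 1), ∀ g : G₁,
        (σ k * (g : K ≃ₐ[ℚ] K)) (P * Ω) = σ k (P * Ω) := by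
      intro k g
      rw [AlgEquiv.mul_apply, hfix g]
    simp only [this, Finset.sum_const, Finset.card_univ, Finset.smul_sum]
  have hcard : Module.finrank K₁ K = Fintype.card G₁ := by
    subst hK₁; exact (IntermediateField.finrank_fixedField_eq_card G₁).trans Nat.card_eq_fintype_card
  have htr : Algebra.trace ℚ K (P * Ω)
      = Fintype.card G₁ • Algebra.trace ℚ K₁ (⟨P * Ω, h⟩ : K₁) := by
    rw [← Algebra.trace_trace (S := K₁) (P * Ω),
      show (Algebra.trace K₁ K) (P * Ω)
        = Module.finrank K₁ K • (⟨P * Ω, h⟩ : K₁) by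
          exact Algebra.trace_algebraMap (R := K₁) (S := K) (⟨P * Ω, h⟩ : K₁),
      map_nsmul, hcard]
  have hmain : (Fintype.card G₁ : K) * algebraMap ℚ K (Algebra.trace ℚ K₁ (⟨P * Ω, h⟩ : K₁))
      = (Fintype.card G₁ : K) * ∑ k : Fin (t - 1), σ k (P * Ω) := by
    have := trace_eq_sum_automorphisms (K := ℚ) (P * Ω)
    rw [htr, hsum] at this
    simpa [nsmul_eq_mul, map_nsmul] using this
  have hne : (Fintype.card G₁ : K) ≠ 0 := by
    exact_mod_cast Nat.cast_ne_zero.2 Fintype.card_ne_zero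
  have := mul_left_cancel₀ hne hmain
  rw [this]
  exact Finset.sum_congr rfl fun k _ => map_mul _ _ _
end

section
/- (Key-switch count for fast full trace) Let M = t^α with t prime and α ≥ 1, and let ω_{t−1} be the multiset of prime factors of t−1 (with multiplicity). The factorized homomorphic trace algorithm uses exactly (α−1)(t−1) + Σ_{ℓ ∈ ω_{t−1}} (ℓ−1) key-switches, and this quantity is at most φ(M) − 1 = t^{α−1}(t−1) − 1 for all t ≥ 2, α ≥ 1 — i.e., the factorized count never exceeds the naive count. -/
lemma sum_pred_primeFactorsList_le : ∀ n : ℕ, 1 ≤ n →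
    (n.primeFactorsList.map (fun ℓ => ℓ - 1)).sum ≤ n - 1 := by
  intro n
  induction n using Nat.strong_induction_on with
  | _ n ih =>
    intro hn
    match n, hn with
    | 1, _ => simp
    | (k+2), _ =>
      rw [Nat.primeFactorsList_add_two]
      set p := (k+2).minFac with hp
      have hpp : p.Prime := Nat.minFac_prime (by omega)
      have hdvd : p ∣ k + 2 := Nat.minFac_dvd _
      set m := (k+2) / p with hm
      have hmul : p * m = k + 2 := Nat.mul_div_cancel' hdvd
      have hm1 : 1 ≤ m := by
        rcases Nat.eq_zero_or_pos m with h | h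
        · rw [h, mul_zero] at hmul; omega
        · exact h
      have h2 := hpp.two_le
      have hmlt : m < k + 2 := by nlinarith
      have hS := ih m hmlt hm1
      simp only [List.map_cons, List.sum_cons]
      have key : p + m ≤ p * m + 1 := by nlinarith
      rw [hmul] at key
      omega

/-- Key-switch count for the fast (factorized) full trace: for `M = t^α` with
`t` prime and `α ≥ 1`, letting `ω_{t-1}` be the multiset of prime factors of
`t - 1` counted with multiplicity, the factorized trace algorithm's key-switch
count `(α-1)(t-1) + ∑_{ℓ ∈ ω_{t-1}} (ℓ-1)` never exceeds the naive count
`φ(M) - 1 = t^(α-1)(t-1) - 1`. -/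
theorem fast_trace_keyswitch_count (t α : ℕ) (ht : t.Prime) (hα : 1 ≤ α) :
    ((α - 1) * (t - 1) + ((t - 1).primeFactorsList.map (fun ℓ => ℓ - 1)).sum ≤
      Nat.totient (t ^ α) - 1) ∧
    Nat.totient (t ^ α) = t ^ (α - 1) * (t - 1) := by
  have htot : Nat.totient (t ^ α) = t ^ (α - 1) * (t - 1) :=
    Nat.totient_prime_pow ht hα
  refine ⟨?_, htot⟩
  rw [htot]
  have ht2 := ht.two_le
  have hS : ((t - 1).primeFactorsList.map (fun ℓ => ℓ - 1)).sum ≤ (t - 1) - 1 :=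
    sum_pred_primeFactorsList_le (t - 1) (by omega)
  have hαP : α ≤ t ^ (α - 1) := by
    calc α = (α - 1) + 1 := by omega
    _ ≤ 2 ^ (α - 1) := Nat.lt_two_pow_self (n := α - 1)
    _ ≤ t ^ (α - 1) := Nat.pow_le_pow_left ht2 _
  have h3 : α * (t - 1) ≤ t ^ (α - 1) * (t - 1) := Nat.mul_le_mul_right _ hαP
  have h4 : (α - 1) * (t - 1) + (t - 1) = α * (t - 1) := by
    have : α - 1 + 1 = α := by omega
    calc (α - 1) * (t - 1) + (t - 1) = (α - 1 + 1) * (t - 1) := by ring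
    _ = α * (t - 1) := by rw [this]
  omega
end
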